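/- (Cauchy determinant identity underlying the Szegő kernel of the symmetrized polydisc) Let n ≥ 1 and let z, w ∈ ℂⁿ satisfy zᵢ·conj(wⱼ) ≠ 1 for all 1 ≤ i, j ≤ n. Then det[ (1 − zᵢ·conj(wⱼ))⁻¹ ]_{i,j=1}^n · ∏_{i,j=1}^n (1 − zᵢ·conj(wⱼ)) = ∏_{1≤i<j≤n} (zᵢ − zⱼ)(conj(wᵢ) − conj(wⱼ)). Consequently, for z, w in the polydisc 𝔻ⁿ, the Szegő kernel of the symmetrized polydisc 𝔾ₙ = s(𝔻ⁿ) satisfies S_{𝔾ₙ}(s(z), s(w)) = ∏_{i,j=1}^n (1 − zᵢ·conj(wⱼ))⁻¹. -/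

import Mathlib

open scoped ComplexConjugate

lemma exists_coeff {ι : Type*} [DecidableEq ι] (b : ι → ℂ) (s : Finset ι) :
    ∃ c : ℕ → ℂ, ∀ t u : ℂ,
      ∏ k ∈ s, (u - b k * t) = ∑ m ∈ Finset.range (s.card + 1), c m * t ^ m * u ^ (s.card - m) := by
  induction s using Finset.induction_on with
  | empty => exact ⟨fun _ => 1, by simp⟩
  | insert _ _ ha ih =>
    rename_i a s
    obtain ⟨c, hc⟩ := ih
    set d := s.card with hd
    refine ⟨fun m => (if m ≤ d then c m else 0) - b a * (if m = 0 then 0 else c (m - 1)), ?_⟩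
    intro t u
    rw [Finset.prod_insert ha, hc t u, Finset.card_insert_of_notMem ha, ← hd]
    have hsplit : ∀ m ∈ Finset.range (d + 1 + 1),
        ((if m ≤ d then c m else 0) - b a * (if m = 0 then 0 else c (m - 1))) * t ^ m
            * u ^ (d + 1 - m)
        = (if m ≤ d then c m else 0) * t ^ m * u ^ (d + 1 - m)
            - (b a * (if m = 0 then 0 else c (m - 1))) * t ^ m * u ^ (d + 1 - m) := by
      intro m _; ring
    rw [Finset.sum_congr rfl hsplit, Finset.sum_sub_distrib]
    have h1 : ∑ m ∈ Finset.range (d + 1 + 1), (if m ≤ d then c m else 0) * t ^ m * u ^ (d + 1 - m)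
        = ∑ m ∈ Finset.range (d + 1), c m * t ^ m * u ^ (d + 1 - m) := by
      rw [Finset.sum_range_succ, if_neg (by omega), zero_mul, zero_mul, add_zero]
      exact Finset.sum_congr rfl fun m hm => by
        rw [if_pos (by simpa [Nat.lt_succ_iff] using Finset.mem_range.mp hm)]
    have h2 : ∑ m ∈ Finset.range (d + 1 + 1),
        (b a * (if m = 0 then 0 else c (m - 1))) * t ^ m * u ^ (d + 1 - m)
        = ∑ m ∈ Finset.range (d + 1), (b a * c m) * t ^ (m + 1) * u ^ (d - m) := by
      rw [Finset.sum_range_succ']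
      simp [Nat.succ_sub_succ]
    rw [h1, h2, sub_mul, Finset.mul_sum, Finset.mul_sum]
    congr 1
    · refine Finset.sum_congr rfl fun m hm => ?_
      have hm' : m ≤ d := by simpa [Nat.lt_succ_iff] using Finset.mem_range.mp hm
      have : d + 1 - m = (d - m) + 1 := by omega
      rw [this, pow_succ]
      ring
    · refine Finset.sum_congr rfl fun m hm => ?_
      rw [pow_succ]; ring

lemma prod_Ioi_rev {n : ℕ} (f : Fin n → Fin n → ℂ) :
    ∏ i, ∏ j ∈ Finset.Ioi i, f (Fin.rev j) (Fin.rev i) = ∏ i, ∏ j ∈ Finset.Ioi i, f i j := by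
  rw [Finset.prod_sigma', Finset.prod_sigma']
  refine Finset.prod_nbij' (fun p => ⟨Fin.rev p.2, Fin.rev p.1⟩)
    (fun p => ⟨Fin.rev p.2, Fin.rev p.1⟩) ?_ ?_ ?_ ?_ ?_ <;>
    simp [Fin.rev_lt_rev]

theorem cauchy_det_key {n : ℕ} (hn : 1 ≤ n) (a b : Fin n → ℂ)
    (hab : ∀ i j, 1 - a i * b j ≠ 0) :
    Matrix.det (Matrix.of fun i j : Fin n => (1 - a i * b j)⁻¹)
        * ∏ i, ∏ j, (1 - a i * b j)
      = ∏ i, ∏ j ∈ Finset.Ioi i, (a i - a j) * (b i - b j) := by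
  by_cases hA : Function.Injective a
  swap
  · -- two equal rows
    rw [Function.not_injective_iff] at hA
    obtain ⟨i, j, hij, hne⟩ := hA
    rw [Matrix.det_zero_of_row_eq hne (funext fun k => by simp [hij]), zero_mul]
    rcases lt_or_gt_of_ne hne with h | h
    · exact (Finset.prod_eq_zero (Finset.mem_univ i) (Finset.prod_eq_zero
        (Finset.mem_Ioi.mpr h) (by rw [hij, sub_self, zero_mul]))).symm
    · exact (Finset.prod_eq_zero (Finset.mem_univ j) (Finset.prod_eq_zero
        (Finset.mem_Ioi.mpr h) (by rw [hij, sub_self, zero_mul]))).symm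
  by_cases hB : Function.Injective b
  swap
  · rw [Function.not_injective_iff] at hB
    obtain ⟨i, j, hij, hne⟩ := hB
    rw [Matrix.det_zero_of_column_eq hne (fun k => by simp [hij]), zero_mul]
    rcases lt_or_gt_of_ne hne with h | h
    · exact (Finset.prod_eq_zero (Finset.mem_univ i) (Finset.prod_eq_zero
        (Finset.mem_Ioi.mpr h) (by rw [hij, sub_self, mul_zero]))).symm
    · exact (Finset.prod_eq_zero (Finset.mem_univ j) (Finset.prod_eq_zero
        (Finset.mem_Ioi.mpr h) (by rw [hij, sub_self, mul_zero]))).symm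
  -- main case : a, b injective
  have hcard : ∀ j : Fin n, (Finset.univ.erase j).card = n - 1 := fun j => by
    rw [Finset.card_erase_of_mem (Finset.mem_univ j), Finset.card_univ, Fintype.card_fin]
  have hsucc : n - 1 + 1 = n := by omega
  choose c hc using fun j : Fin n => exists_coeff b (Finset.univ.erase j)
  set E : Matrix (Fin n) (Fin n) ℂ := Matrix.of (fun m j : Fin n => c j (m : ℕ)) with hE
  set V : Matrix (Fin n) (Fin n) ℂ := Matrix.vandermonde a with hV
  set W : Matrix (Fin n) (Fin n) ℂ :=
    Matrix.of (fun l m : Fin n => b l ^ (n - 1 - (m : ℕ))) with hW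
  have key : ∀ (j : Fin n) (t u : ℂ), ∏ k ∈ Finset.univ.erase j, (u - b k * t)
      = ∑ m : Fin n, c j (m : ℕ) * t ^ (m : ℕ) * u ^ (n - 1 - (m : ℕ)) := by
    intro j t u
    rw [hc j t u, hcard j, Fin.sum_univ_eq_sum_range (fun m => c j m * t ^ m * u ^ (n - 1 - m)),
      hsucc]
  -- V * E = B
  have hVE : V * E = Matrix.of (fun i j : Fin n => ∏ k ∈ Finset.univ.erase j, (1 - a i * b k)) := by
    ext i j
    rw [Matrix.mul_apply]
    calc ∑ m : Fin n, V i m * E m j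
        = ∑ m : Fin n, c j (m : ℕ) * a i ^ (m : ℕ) * (1 : ℂ) ^ (n - 1 - (m : ℕ)) := by
          refine Finset.sum_congr rfl fun m _ => ?_
          simp only [hV, hE, Matrix.vandermonde, Matrix.of_apply, one_pow]
          ring
      _ = ∏ k ∈ Finset.univ.erase j, ((1 : ℂ) - b k * a i) := (key j (a i) 1).symm
      _ = ∏ k ∈ Finset.univ.erase j, (1 - a i * b k) :=
          Finset.prod_congr rfl fun k _ => by ring
  -- W * E = diagonal
  have hWE : W * E = Matrix.diagonal (fun j => ∏ k ∈ Finset.univ.erase j, (b j - b k)) := by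
    ext l j
    rw [Matrix.mul_apply]
    have hsum : ∑ m : Fin n, W l m * E m j = ∏ k ∈ Finset.univ.erase j, (b l - b k) := by
      calc ∑ m : Fin n, W l m * E m j
          = ∑ m : Fin n, c j (m : ℕ) * (1 : ℂ) ^ (m : ℕ) * b l ^ (n - 1 - (m : ℕ)) := by
            refine Finset.sum_congr rfl fun m _ => ?_
            simp only [hW, hE, Matrix.of_apply, one_pow]
            ring
        _ = ∏ k ∈ Finset.univ.erase j, (b l - b k * 1) := (key j 1 (b l)).symm
        _ = ∏ k ∈ Finset.univ.erase j, (b l - b k) := by simp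
    rw [hsum]
    by_cases hlj : l = j
    · subst hlj; simp [Matrix.diagonal]
    · rw [Matrix.diagonal_apply_ne _ hlj]
      exact Finset.prod_eq_zero (Finset.mem_erase.mpr ⟨hlj, Finset.mem_univ l⟩) (sub_self _)
  -- determinant of W
  have hWdet : W.det = ∏ i, ∏ j ∈ Finset.Ioi i, (b i - b j) := by
    have hsub : W = (Matrix.vandermonde (b ∘ Fin.rev)).submatrix Fin.revPerm Fin.revPerm := by
      ext l m
      simp only [hW, Matrix.vandermonde, Matrix.of_apply, Matrix.submatrix_apply,
        Function.comp_apply, Fin.revPerm_apply, Fin.rev_rev, Fin.val_rev]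
      congr 1
      omega
    rw [hsub, Matrix.det_submatrix_equiv_self, Matrix.det_vandermonde]
    exact prod_Ioi_rev (fun x y => b x - b y)
  -- det E
  have hdelta : W.det * E.det = ∏ j, ∏ k ∈ Finset.univ.erase j, (b j - b k) := by
    rw [← Matrix.det_mul, hWE, Matrix.det_diagonal]
  have hsplitDelta : (∏ j : Fin n, ∏ k ∈ Finset.univ.erase j, (b j - b k))
      = (∏ i, ∏ j ∈ Finset.Ioi i, (b i - b j)) * ∏ i, ∏ j ∈ Finset.Ioi i, (b j - b i) := by
    have h := Finset.prod_prod_Ioi_mul_eq_prod_prod_off_diag (fun x y : Fin n => b y - b x)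
    rw [← Finset.prod_mul_distrib]
    simp only [← Finset.prod_mul_distrib] at h ⊢
    rw [show (∏ i : Fin n, ∏ j ∈ Finset.Ioi i, (b i - b j) * (b j - b i))
        = ∏ i : Fin n, ∏ j ∈ Finset.Ioi i, (fun x y : Fin n => b y - b x) j i
            * (fun x y : Fin n => b y - b x) i j from
      Finset.prod_congr rfl fun i _ => Finset.prod_congr rfl fun j _ => rfl, h]
    refine Finset.prod_congr rfl fun j _ => Finset.prod_congr ?_ fun k _ => rfl
    ext k; simp [eq_comm]
  have hWne : W.det ≠ 0 := by
    rw [hWdet, Finset.prod_ne_zero_iff]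
    intro i _
    rw [Finset.prod_ne_zero_iff]
    intro j hj
    exact sub_ne_zero_of_ne (hB.ne (Finset.mem_Ioi.mp hj).ne)
  have hEdet : E.det = ∏ i, ∏ j ∈ Finset.Ioi i, (b j - b i) := by
    apply mul_left_cancel₀ hWne
    rw [hdelta, hsplitDelta, hWdet]
  -- B = diagonal * C
  have hBC : Matrix.of (fun i j : Fin n => ∏ k ∈ Finset.univ.erase j, (1 - a i * b k))
      = Matrix.diagonal (fun i => ∏ k, (1 - a i * b k))
        * Matrix.of (fun i j : Fin n => (1 - a i * b j)⁻¹) := by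
    ext i j
    rw [Matrix.diagonal_mul, Matrix.of_apply, Matrix.of_apply,
      ← Finset.mul_prod_erase Finset.univ _ (Finset.mem_univ j),
      mul_comm (1 - a i * b j), mul_assoc, mul_inv_cancel₀ (hab i j), mul_one]
  have hmain : (∏ i, ∏ k, (1 - a i * b k))
        * (Matrix.of fun i j : Fin n => (1 - a i * b j)⁻¹).det
      = V.det * E.det := by
    calc (∏ i, ∏ k, (1 - a i * b k)) * (Matrix.of fun i j : Fin n => (1 - a i * b j)⁻¹).det
        = (Matrix.diagonal (fun i => ∏ k, (1 - a i * b k))).det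
            * (Matrix.of fun i j : Fin n => (1 - a i * b j)⁻¹).det := by
          rw [Matrix.det_diagonal]
      _ = (Matrix.diagonal (fun i => ∏ k, (1 - a i * b k))
            * Matrix.of fun i j : Fin n => (1 - a i * b j)⁻¹).det := (Matrix.det_mul _ _).symm
      _ = (Matrix.of fun i j : Fin n => ∏ k ∈ Finset.univ.erase j, (1 - a i * b k)).det := by
          rw [← hBC]
      _ = (V * E).det := by rw [hVE]
      _ = V.det * E.det := Matrix.det_mul _ _
  rw [mul_comm] at hmain
  rw [hmain, Matrix.det_vandermonde, hEdet, ← Finset.prod_mul_distrib]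
  simp only [← Finset.prod_mul_distrib]
  exact Finset.prod_congr rfl fun i _ => Finset.prod_congr rfl fun j _ => by ring


/-- **The Cauchy determinant identity underlying the Szegő kernel of the symmetrized
polydisc `𝔾ₙ`.**  Let `z, w ∈ ℂⁿ` with `zᵢ · conj(wⱼ) ≠ 1` for all `i, j`.  Then
`det[(1 - zᵢ conj(wⱼ))⁻¹] · ∏_{i,j} (1 - zᵢ conj(wⱼ)) = ∏_{i<j} (zᵢ - zⱼ)(conj(wᵢ) - conj(wⱼ))`.
Consequently, for `z, w` in the polydisc `𝔻ⁿ`, the Szegő kernel of the symmetrized polydisc,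
defined via the sign representation of `𝔖ₙ` by
`S_{𝔾ₙ}(s(z),s(w)) = (∏_{i<j}(zᵢ-zⱼ)(conj wᵢ - conj wⱼ))⁻¹ Σ_σ sgn(σ) ∏_j (1 - z_j conj(w_{σ j}))⁻¹`,
satisfies `S_{𝔾ₙ}(s(z), s(w)) = ∏_{i,j} (1 - zᵢ conj(wⱼ))⁻¹`; the second conclusion below is
this identity in cross-multiplied form:
`Σ_σ sgn(σ) ∏_j (1 - z_j conj(w_{σ j}))⁻¹ = ∏_{i<j}(zᵢ-zⱼ)(conj wᵢ - conj wⱼ) · ∏_{i,j}(1 - zᵢ conj wⱼ)⁻¹`. -/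
theorem cauchy_determinant_szego {n : ℕ} (hn : 1 ≤ n) (z w : Fin n → ℂ)
    (hzw : ∀ i j, z i * conj (w j) ≠ 1) :
    (Matrix.det (Matrix.of fun i j : Fin n => (1 - z i * conj (w j))⁻¹)
        * ∏ i, ∏ j, (1 - z i * conj (w j))
      = ∏ i, ∏ j ∈ Finset.Ioi i, (z i - z j) * (conj (w i) - conj (w j))) ∧
    ((∀ i, ‖z i‖ < 1) → (∀ i, ‖w i‖ < 1) →
      (∑ σ : Equiv.Perm (Fin n),
          ((Equiv.Perm.sign σ : ℤ) : ℂ) * ∏ j, (1 - z j * conj (w (σ j)))⁻¹)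
        = (∏ i, ∏ j ∈ Finset.Ioi i, (z i - z j) * (conj (w i) - conj (w j)))
            * ∏ i, ∏ j, (1 - z i * conj (w j))⁻¹) := by
  have hab : ∀ i j, (1 : ℂ) - z i * conj (w j) ≠ 0 :=
    fun i j => sub_ne_zero_of_ne (hzw i j).symm
  have h1 := cauchy_det_key hn z (fun j => conj (w j)) hab
  refine ⟨h1, fun _ _ => ?_⟩
  have hP : (∏ i, ∏ j, (1 - z i * conj (w j))) ≠ 0 := by
    rw [Finset.prod_ne_zero_iff]
    intro i _
    rw [Finset.prod_ne_zero_iff]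
    exact fun j _ => hab i j
  have hsum : (∑ σ : Equiv.Perm (Fin n),
        ((Equiv.Perm.sign σ : ℤ) : ℂ) * ∏ j, (1 - z j * conj (w (σ j)))⁻¹)
      = Matrix.det (Matrix.transpose (Matrix.of fun i j : Fin n => (1 - z i * conj (w j))⁻¹)) := by
    rw [Matrix.det_apply]
    refine Finset.sum_congr rfl fun σ _ => ?_
    simp [Units.smul_def, zsmul_eq_mul]
  rw [hsum, Matrix.det_transpose]
  rw [show (∏ i : Fin n, ∏ j : Fin n, (1 - z i * conj (w j))⁻¹)
      = (∏ i : Fin n, ∏ j : Fin n, (1 - z i * conj (w j)))⁻¹ by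
    simp only [Finset.prod_inv_distrib]]
  rw [eq_mul_inv_iff_mul_eq₀ hP]
  exact h1
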